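/- Let (S, f) be a Frobenius GNS in ℕ_0^d. Then S is almost symmetric if and only if PF(S) = L(S) ∪ {f}, where L(S) = {h ∈ H(S) : there exists h' ∈ H(S) with h + h' = f}. -/

import Mathlib

open scoped BigOperators

/-- A generalized numerical semigroup: a submonoid of `ℕ^d` with finite complement. -/
def IsGNS {d : ℕ} (S : Set (Fin d → ℕ)) : Prop :=
  (0 : Fin d → ℕ) ∈ S ∧ (∀ x y : Fin d → ℕ, x ∈ S → y ∈ S → x + y ∈ S) ∧ Sᶜ.Finite

/-- The genus: number of gaps. -/
noncomputable def genus {d : ℕ} (S : Set (Fin d → ℕ)) : ℕ := Sᶜ.ncard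

/-- Pseudo-Frobenius elements. -/
def PF {d : ℕ} (S : Set (Fin d → ℕ)) : Set (Fin d → ℕ) :=
  {h | h ∉ S ∧ ∀ s ∈ S, s ≠ 0 → h + s ∈ S}

/-- The type: number of pseudo-Frobenius elements. -/
noncomputable def typ {d : ℕ} (S : Set (Fin d → ℕ)) : ℕ := (PF S).ncard

/-- Maximal elements of a set with respect to a relation. -/
def Maximals {α : Type*} (le : α → α → Prop) (X : Set α) : Set α :=
  {x ∈ X | ∀ y ∈ X, le x y → x = y}

/-- `f` is the unique maximal element of the set of gaps w.r.t. the componentwise order. -/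
def IsFrobenius {d : ℕ} (S : Set (Fin d → ℕ)) (f : Fin d → ℕ) : Prop :=
  Maximals (· ≤ ·) Sᶜ = {f}

/-- Almost symmetric: `2 g(S) + 1 - t(S) = ∏ (h i + 1)` for some gap `h`. -/
def AlmostSymmetric {d : ℕ} (S : Set (Fin d → ℕ)) : Prop :=
  ∃ h ∉ S, 2 * genus S + 1 = typ S + ∏ i, (h i + 1)

/-- Special gaps. -/
def SG {d : ℕ} (S : Set (Fin d → ℕ)) : Set (Fin d → ℕ) :=
  {h ∈ PF S | h + h ∈ S}

/-- The partial order `≤_S` : `y ≤_S x` iff `x - y ∈ S`. -/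
def leS {d : ℕ} (S : Set (Fin d → ℕ)) (x y : Fin d → ℕ) : Prop :=
  ∃ s ∈ S, x + s = y

/-- The Apéry set of `S` with respect to `n`. -/
def Ap {d : ℕ} (S : Set (Fin d → ℕ)) (n : Fin d → ℕ) : Set (Fin d → ℕ) :=
  {s ∈ S | ¬ ∃ u ∈ S, u + n = s}

/-- The reduced Apéry set of `S` with respect to `n`. -/
def Cred {d : ℕ} (S : Set (Fin d → ℕ)) (n : Fin d → ℕ) : Set (Fin d → ℕ) :=
  {s ∈ Ap S n | ∃ h, h ∉ S ∧ s ≤ h + n}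

/-- A monomial order on `ℕ^d` given by its strict-order relation. -/
def IsMonomialOrder (d : ℕ) (lt : (Fin d → ℕ) → (Fin d → ℕ) → Prop) : Prop :=
  (∀ a, ¬ lt a a) ∧ (∀ a b c, lt a b → lt b c → lt a c) ∧
  (∀ a b, a ≠ b → lt a b ∨ lt b a) ∧
  (∀ u a b, lt a b → lt (a + u) (b + u)) ∧
  (∀ a, a ≠ (0 : Fin d → ℕ) → lt 0 a)

/-- Minimal generator of a GNS. -/
def IsMinGen {d : ℕ} (S : Set (Fin d → ℕ)) (x : Fin d → ℕ) : Prop :=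
  x ∈ S ∧ x ≠ 0 ∧ ∀ y ∈ S, ∀ z ∈ S, y ≠ 0 → z ≠ 0 → y + z ≠ x

/-- Irreducible GNS: not an intersection of two GNSs properly containing it. -/
def GNSIrreducible {d : ℕ} (S : Set (Fin d → ℕ)) : Prop :=
  ¬ ∃ S₁ S₂ : Set (Fin d → ℕ), IsGNS S₁ ∧ IsGNS S₂ ∧ S ⊂ S₁ ∧ S ⊂ S₂ ∧ S = S₁ ∩ S₂

/-- Pseudo-symmetric: `PF S = {f, f/2}`. -/
def PseudoSymmetric {d : ℕ} (S : Set (Fin d → ℕ)) : Prop :=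
  ∃ f q : Fin d → ℕ, f ≠ q ∧ q + q = f ∧ PF S = {f, q}

/-- A Frobenius GNS `(S, f)` is almost symmetric iff `PF(S) = L(S) ∪ {f}`. -/
theorem statement5 (d : ℕ) (hd : 0 < d) (S : Set (Fin d → ℕ)) (hS : IsGNS S)
    (f : Fin d → ℕ) (hf : IsFrobenius S f) :
    AlmostSymmetric S ↔
      PF S = {h : Fin d → ℕ | h ∉ S ∧ ∃ h', h' ∉ S ∧ h + h' = f} ∪ {f} := by
  classical
  obtain ⟨h0S, haddS, hfin⟩ := hS
  set L : Set (Fin d → ℕ) := {h : Fin d → ℕ | h ∉ S ∧ ∃ h', h' ∉ S ∧ h + h' = f} with hL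
  -- f is a gap
  have hfH : f ∉ S := by
    have : f ∈ Maximals (· ≤ ·) Sᶜ := by rw [hf]; rfl
    exact this.1
  -- every gap is ≤ f
  have hle : ∀ h : Fin d → ℕ, h ∉ S → h ≤ f := by
    intro h hh
    have hT : ({x | x ∈ Sᶜ ∧ h ≤ x} : Set (Fin d → ℕ)).Finite :=
      hfin.subset (fun x hx => hx.1)
    obtain ⟨m, hm, hmax⟩ := Set.Finite.exists_maximalFor id _ hT ⟨h, hh, le_refl h⟩
    have hmMax : m ∈ Maximals (· ≤ ·) Sᶜ :=
      ⟨hm.1, fun y hy hmy => le_antisymm hmy (hmax ⟨hy, hm.2.trans hmy⟩ hmy)⟩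
    rw [hf, Set.mem_singleton_iff] at hmMax
    exact hm.2.trans (le_of_eq hmMax)
  -- subtraction facts
  have hsub : ∀ x : Fin d → ℕ, x ≤ f → x + (f - x) = f := by
    intro x hx
    funext i
    have hxi : x i ≤ f i := hx i
    simp only [Pi.add_apply, Pi.sub_apply]
    omega
  have hdual : ∀ x ∈ S, x ≤ f → f - x ∉ S := by
    intro x hxS hxf hcon
    exact hfH (hsub x hxf ▸ haddS x (f - x) hxS hcon)
  -- characterization of L
  have hLchar : ∀ h : Fin d → ℕ, h ∈ L ↔ (h ∉ S ∧ f - h ∉ S) := by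
    intro h
    constructor
    · rintro ⟨hh, h', hh', heq⟩
      have hpt : ∀ i, h i + h' i = f i := fun i => congrFun heq i
      have : f - h = h' := by
        funext i
        have := hpt i
        simp only [Pi.sub_apply]
        omega
      exact ⟨hh, this ▸ hh'⟩
    · rintro ⟨hh, hh'⟩
      exact ⟨hh, f - h, hh', hsub h (hle h hh)⟩
  -- f ∈ PF
  have hfPF : f ∈ PF S := by
    refine ⟨hfH, fun s hs hs0 => ?_⟩
    by_contra hcon
    have h1 : f + s ≤ f := hle _ hcon
    have h2 : f ≤ f + s := le_add_of_nonneg_right (by intro i; exact Nat.zero_le _)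
    have hfs : f + s = f := le_antisymm h1 h2
    apply hs0
    funext i
    have h3 := congrFun hfs i
    simp only [Pi.add_apply] at h3
    simp only [Pi.zero_apply]
    omega
  -- f ∉ L
  have hfL : f ∉ L := by
    rintro ⟨-, h', hh', heq⟩
    have : h' = 0 := by
      funext i
      have := congrFun heq i
      simp only [Pi.add_apply] at this
      simp only [Pi.zero_apply]
      omega
    exact hh' (this ▸ h0S)
  -- PF ⊆ insert f L
  have hPFsub : PF S ⊆ insert f L := by
    rintro h ⟨hh, hadd⟩
    by_cases hfh : f - h ∈ S
    · left
      by_cases h0 : f - h = 0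
      · have := hsub h (hle h hh)
        rw [h0, add_zero] at this
        exact this
      · exact absurd (hsub h (hle h hh) ▸ hadd _ hfh h0) hfH
    · exact Or.inr ((hLchar h).mpr ⟨hh, hfh⟩)
  -- finiteness
  have hLfin : L.Finite := hfin.subset (fun h hh => ((hLchar h).mp hh).1)
  have hPFfin : (PF S).Finite := hfin.subset (fun h hh => hh.1)
  have hBfin : (Set.Iic f).Finite := Set.finite_Iic f
  -- counting: |Iic f| = ∏ (f i + 1)
  have hN : (Set.Iic f).ncard = ∏ i, (f i + 1) := by
    have e : (Set.Iic f) ≃ (∀ i, Fin (f i + 1)) :=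
      { toFun := fun x i => ⟨x.1 i, Nat.lt_succ_of_le (x.2 i)⟩
        invFun := fun v => ⟨fun i => (v i).1, fun i => Nat.lt_succ_iff.mp (v i).2⟩
        left_inv := fun x => by ext i; rfl
        right_inv := fun v => by ext i; rfl }
    rw [← Nat.card_coe_set_eq, Nat.card_congr e]
    simp [Nat.card_eq_fintype_card, Fintype.card_pi]
  -- partition of Iic f
  have hA : (S ∩ Set.Iic f).ncard + Sᶜ.ncard = ∏ i, (f i + 1) := by
    rw [← hN, ← Set.ncard_union_eq (by
        rw [Set.disjoint_left]; rintro x ⟨hx, -⟩ hx'; exact hx' hx)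
      (hBfin.subset Set.inter_subset_right) hfin]
    congr 1
    apply Set.Subset.antisymm
    · rintro x (⟨-, hx⟩ | hx)
      · exact hx
      · exact hle x hx
    · intro x hx
      by_cases hxS : x ∈ S
      · exact Or.inl ⟨hxS, hx⟩
      · exact Or.inr hxS
  -- bijection: (f - ·) maps Sᶜ \ L onto S ∩ Iic f
  have himg : (fun x => f - x) '' (Sᶜ \ L) = S ∩ Set.Iic f := by
    apply Set.Subset.antisymm
    · rintro y ⟨x, ⟨hx, hxL⟩, rfl⟩
      have hfx : f - x ∈ S := by
        by_contra hcon
        exact hxL ((hLchar x).mpr ⟨hx, hcon⟩)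
      exact ⟨hfx, fun i => Nat.sub_le (f i) (x i)⟩
    · rintro y ⟨hyS, hyf⟩
      refine ⟨f - y, ⟨hdual y hyS hyf, ?_⟩, ?_⟩
      · rw [hLchar]
        rintro ⟨-, hcon⟩
        apply hcon
        have heq2 : f - (f - y) = y := by
          funext i
          have hyi : y i ≤ f i := hyf i
          simp only [Pi.sub_apply]
          omega
        rw [heq2]
        exact hyS
      · funext i
        have hyi : y i ≤ f i := hyf i
        simp only [Pi.sub_apply]
        omega
  have hinj : Set.InjOn (fun x => f - x) (Sᶜ \ L) := by
    rintro x ⟨hx, -⟩ y ⟨hy, -⟩ hxy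
    have hxf := hle x hx
    have hyf := hle y hy
    funext i
    have h1 := congrFun hxy i
    have h2 : x i ≤ f i := hxf i
    have h3 : y i ≤ f i := hyf i
    simp only [Pi.sub_apply] at h1
    omega
  have hB : L.ncard + (S ∩ Set.Iic f).ncard = Sᶜ.ncard := by
    rw [← himg, Set.ncard_image_of_injOn hinj, add_comm]
    exact Set.ncard_diff_add_ncard_of_subset (fun h hh => ((hLchar h).mp hh).1) hfin
  -- ncard of insert f L
  have hins : (insert f L).ncard = L.ncard + 1 := Set.ncard_insert_of_notMem hfL hLfin
  have ht : typ S ≤ L.ncard + 1 := hins ▸ Set.ncard_le_ncard hPFsub (hLfin.insert f)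
  have hkey : typ S = L.ncard + 1 ↔ PF S = insert f L := by
    constructor
    · intro h
      exact Set.eq_of_subset_of_ncard_le hPFsub (by rw [hins, ← h]; exact le_rfl) (hLfin.insert f)
    · intro h
      rw [typ, h, hins]
  have hunion : L ∪ {f} = insert f L := Set.union_singleton
  rw [hunion] at *
  constructor
  · rintro ⟨h, hh, heq⟩
    have hP : ∏ i, (h i + 1) ≤ ∏ i, (f i + 1) :=
      Finset.prod_le_prod' (fun i _ => Nat.succ_le_succ (hle h hh i))
    rw [hkey.mp ?_]
    have := ht
    unfold genus at heq
    omega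
  · intro h
    refine ⟨f, hfH, ?_⟩
    have := hkey.mpr h
    unfold genus
    omega
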